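/- For any n-classifier h: 𝕐^n → {1,…,J}^n and any probability model (X_{1:n}, Y_{1:n}), the clustering risk of the induced clusterer satisfies: the infimum over classifiers of E[min_{τ ∈ S_J} E[(1/n)∑_{i=1}^n 1[τ(X_i) ≠ h_i(Y_{1:n})] | Y_{1:n}]] equals the infimum over classifiers of E[(1/n)∑_{i=1}^n 1[X_i ≠ h_i(Y_{1:n})]] (the Bayes risk of classification). -/

import Mathlib

namespace InfClusterAux

variable {α β : Type*}

/-- Running argmin over a list (with initial candidate `a`). -/
noncomputable def listArgmin (f : α → β → ℝ) (y : β) : List α → α → α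
  | [], a => a
  | b :: l, a => listArgmin f y l (if f b y < f a y then b else a)

@[simp] theorem listArgmin_nil (f : α → β → ℝ) (y : β) (a : α) :
    listArgmin f y [] a = a := rfl

@[simp] theorem listArgmin_cons (f : α → β → ℝ) (y : β) (b : α) (l : List α) (a : α) :
    listArgmin f y (b :: l) a = listArgmin f y l (if f b y < f a y then b else a) := rfl

theorem listArgmin_le (f : α → β → ℝ) (l : List α) (a : α) (y : β) :
    ∀ c ∈ a :: l, f (listArgmin f y l a) y ≤ f c y := by
  induction l generalizing a with
  | nil =>
    intro c hc
    rcases List.mem_singleton.mp hc with rfl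
    simp
  | cons b l ih =>
    intro c hc
    set a' := if f b y < f a y then b else a with ha'
    have key : ∀ d ∈ a' :: l, f (listArgmin f y l a') y ≤ f d y := ih a'
    have hha : f a' y ≤ f a y := by
      rw [ha']; split
      · exact le_of_lt ‹_›
      · exact le_rfl
    have hhb : f a' y ≤ f b y := by
      rw [ha']; split
      · exact le_rfl
      · exact le_of_not_gt ‹_›
    have hself := key a' List.mem_cons_self
    rw [listArgmin_cons, ← ha']
    rcases List.mem_cons.mp hc with rfl | hc
    · exact le_trans hself hha
    rcases List.mem_cons.mp hc with rfl | hc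
    · exact le_trans hself hhb
    · exact key c (List.mem_cons_of_mem _ hc)

theorem listArgmin_measurableSet (f : α → β → ℝ) (mβ : MeasurableSpace β)
    (hf : ∀ a, Measurable (f a)) (l : List α) (a c : α) :
    MeasurableSet {y | listArgmin f y l a = c} := by
  induction l generalizing a with
  | nil =>
    by_cases h : a = c
    · exact MeasurableSet.univ.congr (by ext y; simp [h])
    · exact MeasurableSet.empty.congr (by ext y; simp [h])
  | cons b l ih =>
    have hdecomp : {y | listArgmin f y (b :: l) a = c}
        = ({y | f b y < f a y} ∩ {y | listArgmin f y l b = c})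
          ∪ ({y | f b y < f a y}ᶜ ∩ {y | listArgmin f y l a = c}) := by
      ext y
      by_cases h : f b y < f a y <;> simp [h]
    rw [hdecomp]
    exact ((measurableSet_lt (hf b) (hf a)).inter (ih b)).union
      ((measurableSet_lt (hf b) (hf a)).compl.inter (ih a))

/-- The sub-σ-algebra generated by `Y`. -/
def mSub {Ω 𝕐 : Type*} [MeasurableSpace 𝕐] (Y : Ω → 𝕐) : MeasurableSpace Ω :=
  MeasurableSpace.comap Y inferInstance

end InfClusterAux

open MeasureTheory ProbabilityTheory Finset InfClusterAux

/-- The infimum over (measurable) classifiers of the expected conditional minimum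
over label permutations of the misclassification proportion equals the infimum over
classifiers of the plain expected misclassification proportion (the Bayes risk of
classification). -/
theorem inf_clustering_risk_eq_inf_class_risk
    {Ω 𝕐 : Type*} [MeasurableSpace Ω] [MeasurableSpace 𝕐]
    (μ : Measure Ω) [IsProbabilityMeasure μ]
    (n J : ℕ) (hn : 1 ≤ n) (hJ : 1 ≤ J)
    (X : Fin n → Ω → Fin J) (hX : ∀ i, Measurable (X i))
    (Y : Ω → 𝕐) (hY : Measurable Y) :
    (⨅ h : {h : 𝕐 → Fin n → Fin J // Measurable h},
      ∫ ω, ⨅ τ : Equiv.Perm (Fin J),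
        (μ[fun ω' => (1 / n : ℝ) * ∑ i, if τ (X i ω') ≠ h.1 (Y ω') i then 1 else 0
          | MeasurableSpace.comap Y inferInstance]) ω ∂μ)
    = ⨅ h : {h : 𝕐 → Fin n → Fin J // Measurable h},
        ∫ ω, (1 / n : ℝ) * ∑ i, if X i ω ≠ h.1 (Y ω) i then 1 else 0 ∂μ := by
  classical
  have hmS : MeasurableSpace.comap Y inferInstance = mSub Y := rfl
  rw [hmS]
  have hm : mSub Y ≤ ‹MeasurableSpace Ω› := hY.comap_le
  haveI : SigmaFinite (μ.trim hm) := by infer_instance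
  -- the loss function
  set loss : (𝕐 → Fin n → Fin J) → Ω → ℝ :=
    fun h ω => (1 / n : ℝ) * ∑ i, if X i ω ≠ h (Y ω) i then 1 else 0 with hloss_def
  have hloss_nonneg : ∀ h ω, 0 ≤ loss h ω := by
    intro h ω
    refine mul_nonneg (by positivity) (Finset.sum_nonneg fun i _ => ?_)
    split <;> norm_num
  have hloss_le_one : ∀ h ω, loss h ω ≤ 1 := by
    intro h ω
    have h1 : (∑ i, if X i ω ≠ h (Y ω) i then (1:ℝ) else 0) ≤ n := by
      calc (∑ i, if X i ω ≠ h (Y ω) i then (1:ℝ) else 0) ≤ ∑ _i : Fin n, (1:ℝ) := by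
            refine Finset.sum_le_sum fun i _ => ?_
            split <;> norm_num
        _ = n := by simp
    have hn0 : (0:ℝ) < n := by exact_mod_cast hn
    calc loss h ω ≤ (1 / n : ℝ) * n :=
          mul_le_mul_of_nonneg_left h1 (by positivity)
      _ = 1 := by field_simp
  have hloss_meas : ∀ h : 𝕐 → Fin n → Fin J, Measurable h → Measurable (loss h) := by
    intro h hh
    refine Measurable.const_mul (Finset.measurable_sum _ fun i _ => ?_) _
    have hset : MeasurableSet {ω | X i ω ≠ h (Y ω) i} := by
      have hpair : Measurable fun ω => (X i ω, h (Y ω) i) :=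
        (hX i).prodMk ((measurable_pi_apply i).comp (hh.comp hY))
      exact hpair ((Set.to_countable {p : Fin J × Fin J | p.1 ≠ p.2}).measurableSet)
    exact Measurable.ite hset measurable_const measurable_const
  have hloss_int : ∀ h : 𝕐 → Fin n → Fin J, Measurable h → Integrable (loss h) μ := by
    intro h hh
    refine ⟨(hloss_meas h hh).aestronglyMeasurable,
      HasFiniteIntegral.of_bounded (C := 1) (ae_of_all _ fun ω => ?_)⟩
    rw [Real.norm_eq_abs, abs_of_nonneg (hloss_nonneg h ω)]
    exact hloss_le_one h ω
  -- permuted classifiers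
  set Hp : (𝕐 → Fin n → Fin J) → Equiv.Perm (Fin J) → (𝕐 → Fin n → Fin J) :=
    fun h τ => fun y i => τ.symm (h y i) with hHp_def
  have hHp_meas : ∀ (h : 𝕐 → Fin n → Fin J), Measurable h → ∀ τ, Measurable (Hp h τ) := by
    intro h hh τ
    refine measurable_pi_lambda _ fun i => ?_
    refine measurable_to_countable' fun j => ?_
    have : (fun y => Hp h τ y i) ⁻¹' {j} = (fun y => h y i) ⁻¹' {τ j} := by
      ext y
      simp [hHp_def, Equiv.symm_apply_eq]
    rw [this]
    exact ((measurable_pi_apply i).comp hh) (measurableSet_singleton _)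
  -- the inner functions agree
  have hfun : ∀ (h : 𝕐 → Fin n → Fin J) (τ : Equiv.Perm (Fin J)),
      (fun ω' => (1 / n : ℝ) * ∑ i, if τ (X i ω') ≠ h (Y ω') i then 1 else 0)
        = loss (Hp h τ) := by
    intro h τ
    funext ω
    simp only [hloss_def]
    refine congrArg _ (Finset.sum_congr rfl fun i _ => ?_)
    refine if_congr ?_ rfl rfl
    constructor
    · intro hne heq
      exact hne (by rw [heq]; simp [hHp_def])
    · intro hne heq
      refine hne ?_
      simp only [hHp_def]
      rw [← heq]
      simp
  -- nonemptiness of the classifier type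
  haveI hne : Nonempty {h : 𝕐 → Fin n → Fin J // Measurable h} :=
    ⟨⟨fun _ _ => ⟨0, hJ⟩, measurable_const⟩⟩
  -- nonnegativity of the clustering risk
  have hclust_nonneg : ∀ h : {h : 𝕐 → Fin n → Fin J // Measurable h},
      (0:ℝ) ≤ ∫ ω, ⨅ τ : Equiv.Perm (Fin J),
        (μ[fun ω' => (1 / n : ℝ) * ∑ i, if τ (X i ω') ≠ h.1 (Y ω') i then 1 else 0
          | mSub Y]) ω ∂μ := by
    intro h
    refine integral_nonneg_of_ae ?_
    have hae : ∀ᵐ ω ∂μ, ∀ τ : Equiv.Perm (Fin J),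
        (0:ℝ) ≤ (μ[fun ω' => (1 / n : ℝ) * ∑ i,
          if τ (X i ω') ≠ h.1 (Y ω') i then 1 else 0 | mSub Y]) ω := by
      rw [ae_all_iff]
      intro τ
      refine condExp_nonneg (ae_of_all _ fun ω => ?_)
      rw [hfun h.1 τ]
      exact hloss_nonneg _ ω
    filter_upwards [hae] with ω hω
    exact le_ciInf hω
  have hclass_nonneg : ∀ h : {h : 𝕐 → Fin n → Fin J // Measurable h},
      (0:ℝ) ≤ ∫ ω, loss h.1 ω ∂μ :=
    fun h => integral_nonneg (hloss_nonneg h.1)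
  have hbddL : BddBelow (Set.range fun h : {h : 𝕐 → Fin n → Fin J // Measurable h} =>
      ∫ ω, ⨅ τ : Equiv.Perm (Fin J),
        (μ[fun ω' => (1 / n : ℝ) * ∑ i, if τ (X i ω') ≠ h.1 (Y ω') i then 1 else 0
          | mSub Y]) ω ∂μ) := by
    refine ⟨0, ?_⟩
    rintro x ⟨h, rfl⟩
    exact hclust_nonneg h
  have hbddR : BddBelow (Set.range fun h : {h : 𝕐 → Fin n → Fin J // Measurable h} =>
      ∫ ω, loss h.1 ω ∂μ) := by
    refine ⟨0, ?_⟩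
    rintro x ⟨h, rfl⟩
    exact hclass_nonneg h
  refine le_antisymm ?_ ?_
  · -- LHS ≤ RHS
    refine le_ciInf fun h => ?_
    refine le_trans (ciInf_le hbddL h) ?_
    have hτ1 : ∀ᵐ ω ∂μ, (⨅ τ : Equiv.Perm (Fin J),
        (μ[fun ω' => (1 / n : ℝ) * ∑ i, if τ (X i ω') ≠ h.1 (Y ω') i then 1 else 0
          | mSub Y]) ω) ≤ (μ[loss h.1 | mSub Y]) ω := by
      refine ae_of_all _ fun ω => ?_
      have hb : BddBelow (Set.range fun τ : Equiv.Perm (Fin J) =>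
          (μ[fun ω' => (1 / n : ℝ) * ∑ i, if τ (X i ω') ≠ h.1 (Y ω') i then 1 else 0
            | mSub Y]) ω) := (Set.finite_range _).bddBelow
      have h1 := ciInf_le hb (1 : Equiv.Perm (Fin J))
      refine le_trans h1 (le_of_eq ?_)
      have hHp1 : Hp h.1 1 = h.1 := by
        funext y i
        simp [hHp_def]
        rfl
      rw [hfun h.1 1, hHp1]
    have hnn : ∀ᵐ ω ∂μ, (0:ℝ) ≤ ⨅ τ : Equiv.Perm (Fin J),
        (μ[fun ω' => (1 / n : ℝ) * ∑ i, if τ (X i ω') ≠ h.1 (Y ω') i then 1 else 0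
          | mSub Y]) ω := by
      have hae : ∀ᵐ ω ∂μ, ∀ τ : Equiv.Perm (Fin J),
          (0:ℝ) ≤ (μ[fun ω' => (1 / n : ℝ) * ∑ i,
            if τ (X i ω') ≠ h.1 (Y ω') i then 1 else 0 | mSub Y]) ω := by
        rw [ae_all_iff]
        intro τ
        refine condExp_nonneg (ae_of_all _ fun ω => ?_)
        rw [hfun h.1 τ]
        exact hloss_nonneg _ ω
      filter_upwards [hae] with ω hω
      exact le_ciInf hω
    calc (∫ ω, ⨅ τ : Equiv.Perm (Fin J),
        (μ[fun ω' => (1 / n : ℝ) * ∑ i, if τ (X i ω') ≠ h.1 (Y ω') i then 1 else 0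
          | mSub Y]) ω ∂μ)
        ≤ ∫ ω, (μ[loss h.1 | mSub Y]) ω ∂μ :=
          integral_mono_of_nonneg hnn integrable_condExp hτ1
      _ = ∫ ω, loss h.1 ω ∂μ := integral_condExp hm
      _ = ∫ ω, (1 / n : ℝ) * ∑ i, if X i ω ≠ h.1 (Y ω) i then 1 else 0 ∂μ := by
          simp only [hloss_def]
  · -- RHS ≤ LHS
    refine le_ciInf fun h => ?_
    set g : Equiv.Perm (Fin J) → Ω → ℝ := fun τ => μ[loss (Hp h.1 τ) | mSub Y] with hg_def
    have hg_meas : ∀ τ, Measurable[mSub Y] (g τ) := fun τ =>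
      stronglyMeasurable_condExp.measurable
    have hg_int : ∀ τ, Integrable (g τ) μ := fun τ => integrable_condExp
    set τhat : Ω → Equiv.Perm (Fin J) :=
      fun ω => listArgmin g ω (Finset.univ.toList) 1 with hτhat_def
    have hτhat_min : ∀ ω τ, g (τhat ω) ω ≤ g τ ω := by
      intro ω τ
      refine listArgmin_le g _ 1 ω τ ?_
      rcases eq_or_ne τ 1 with rfl | hτ
      · exact List.mem_cons_self
      · exact List.mem_cons_of_mem _ (Finset.mem_toList.mpr (Finset.mem_univ τ))
    have hτhat_fib : ∀ τ, MeasurableSet[mSub Y] {ω | τhat ω = τ} := fun τ =>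
      listArgmin_measurableSet g (mSub Y) hg_meas _ 1 τ
    have hinf_eq : ∀ ω, (⨅ τ, g τ ω) = g (τhat ω) ω := fun ω =>
      le_antisymm (ciInf_le (Set.finite_range _).bddBelow _) (le_ciInf (hτhat_min ω))
    -- factor fibers through Y
    have hfib' : ∀ τ, ∃ B : Set 𝕐, MeasurableSet B ∧ Y ⁻¹' B = {ω | τhat ω = τ} :=
      fun τ => hτhat_fib τ
    choose B hB_meas hB_pre using hfib'
    -- disjointify
    set e : Equiv.Perm (Fin J) ≃ Fin (Fintype.card (Equiv.Perm (Fin J))) :=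
      Fintype.equivFin _ with he_def
    set B' : Equiv.Perm (Fin J) → Set 𝕐 :=
      fun τ => B τ \ ⋃ (σ) (_ : e σ < e τ), B σ with hB'_def
    have hB'_meas : ∀ τ, MeasurableSet (B' τ) := fun τ =>
      (hB_meas τ).diff (MeasurableSet.iUnion fun σ =>
        MeasurableSet.iUnion fun _ => hB_meas σ)
    have hB'_pre : ∀ τ, Y ⁻¹' (B' τ) = {ω | τhat ω = τ} := by
      intro τ
      have hsplit : Y ⁻¹' (B' τ) = (Y ⁻¹' B τ) \ ⋃ (σ) (_ : e σ < e τ), Y ⁻¹' B σ := by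
        simp [hB'_def, Set.preimage_diff, Set.preimage_iUnion]
      rw [hsplit]
      ext ω
      simp only [Set.mem_diff, Set.mem_iUnion, hB_pre, Set.mem_setOf_eq, not_exists]
      constructor
      · rintro ⟨h1, -⟩; exact h1
      · intro h1
        refine ⟨h1, fun σ hσ hσ' => ?_⟩
        rw [h1] at hσ'
        rw [← hσ'] at hσ
        exact lt_irrefl _ hσ
    have hB'_disj : ∀ y τ τ', y ∈ B' τ → y ∈ B' τ' → τ = τ' := by
      intro y τ τ' h1 h2
      by_contra hne'
      rcases lt_trichotomy (e τ) (e τ') with hlt | heq | hgt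
      · exact h2.2 (Set.mem_iUnion.mpr ⟨τ, Set.mem_iUnion.mpr ⟨hlt, h1.1⟩⟩)
      · exact hne' (e.injective heq)
      · exact h1.2 (Set.mem_iUnion.mpr ⟨τ', Set.mem_iUnion.mpr ⟨hgt, h2.1⟩⟩)
    -- the selected permutation as a function of y
    set σy : 𝕐 → Equiv.Perm (Fin J) :=
      fun y => if hy : ∃ τ, y ∈ B' τ then hy.choose else 1 with hσy_def
    have hσy_eq : ∀ y τ, y ∈ B' τ → σy y = τ := by
      intro y τ hyτ
      have hy : ∃ τ, y ∈ B' τ := ⟨τ, hyτ⟩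
      simp only [hσy_def, dif_pos hy]
      exact hB'_disj y _ τ hy.choose_spec hyτ
    have hσy_τhat : ∀ ω, σy (Y ω) = τhat ω := by
      intro ω
      have hmem : ω ∈ Y ⁻¹' (B' (τhat ω)) := by
        rw [hB'_pre]
        exact rfl
      exact hσy_eq _ _ hmem
    have hσy_fib : ∀ τ, MeasurableSet (σy ⁻¹' {τ}) := by
      intro τ
      have hset : σy ⁻¹' {τ} = B' τ ∪ ((⋃ τ', B' τ')ᶜ ∩ {y : 𝕐 | τ = 1}) := by
        ext y
        simp only [Set.mem_preimage, Set.mem_singleton_iff, Set.mem_union, Set.mem_inter_iff,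
          Set.mem_compl_iff, Set.mem_iUnion, Set.mem_setOf_eq, not_exists]
        constructor
        · intro hyy
          by_cases hy : ∃ τ', y ∈ B' τ'
          · left
            obtain ⟨τ', hτ'⟩ := hy
            rw [← hyy, hσy_eq y τ' hτ']
            exact hτ'
          · right
            push_neg at hy
            refine ⟨hy, ?_⟩
            rw [hσy_def] at hyy
            simp only [dif_neg (not_exists.mpr hy)] at hyy
            exact hyy.symm
        · rintro (hyB | ⟨hynot, rfl⟩)
          · exact hσy_eq y τ hyB
          · rw [hσy_def]
            simp only [dif_neg (not_exists.mpr hynot)]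
      rw [hset]
      refine (hB'_meas τ).union ?_
      refine ((MeasurableSet.iUnion fun τ' => hB'_meas τ').compl).inter ?_
      by_cases hτ1 : τ = 1
      · exact MeasurableSet.univ.congr (by ext y; simp [hτ1])
      · exact MeasurableSet.empty.congr (by ext y; simp [hτ1])
    -- the improved classifier
    set h' : 𝕐 → Fin n → Fin J := fun y => Hp h.1 (σy y) y with hh'_def
    have hh'_meas : Measurable h' := by
      refine measurable_pi_lambda _ fun i => ?_
      refine measurable_to_countable' fun j => ?_
      have hdec : (fun y => h' y i) ⁻¹' {j}
          = ⋃ τ : Equiv.Perm (Fin J), (σy ⁻¹' {τ}) ∩ ((fun y => h.1 y i) ⁻¹' {τ j}) := by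
        ext y
        simp only [Set.mem_preimage, Set.mem_singleton_iff, Set.mem_iUnion, Set.mem_inter_iff,
          hh'_def, hHp_def]
        constructor
        · intro hyy
          exact ⟨σy y, rfl, by rw [← hyy]; simp⟩
        · rintro ⟨τ, hτ, hτ'⟩
          rw [hτ, hτ']
          simp
      rw [hdec]
      exact MeasurableSet.iUnion fun τ => (hσy_fib τ).inter
        (((measurable_pi_apply i).comp h.2) (measurableSet_singleton _))
    -- key pointwise identities
    have hP1 : ∀ ω, (⨅ τ, g τ ω)
        = ∑ τ : Equiv.Perm (Fin J), (Y ⁻¹' (B' τ)).indicator (g τ) ω := by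
      intro ω
      rw [hinf_eq ω, Finset.sum_eq_single_of_mem (τhat ω) (Finset.mem_univ _)]
      · rw [Set.indicator_of_mem]
        rw [hB'_pre]
        exact rfl
      · intro τ _ hτ
        refine Set.indicator_of_notMem ?_ _
        rw [hB'_pre]
        simp only [Set.mem_setOf_eq]
        exact fun hc => hτ (hc ▸ rfl)
    have hP2 : ∀ ω, (∑ τ : Equiv.Perm (Fin J),
        (Y ⁻¹' (B' τ)).indicator (loss (Hp h.1 τ)) ω) = loss h' ω := by
      intro ω
      rw [Finset.sum_eq_single_of_mem (τhat ω) (Finset.mem_univ _)]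
      · rw [Set.indicator_of_mem]
        · have : h' (Y ω) = Hp h.1 (τhat ω) (Y ω) := by
            rw [hh'_def]
            simp only []
            rw [hσy_τhat ω]
          simp only [hloss_def, this]
        · rw [hB'_pre]
          exact rfl
      · intro τ _ hτ
        refine Set.indicator_of_notMem ?_ _
        rw [hB'_pre]
        simp only [Set.mem_setOf_eq]
        exact fun hc => hτ (hc ▸ rfl)
    -- integral computation
    have hmsY : ∀ τ, MeasurableSet (Y ⁻¹' (B' τ)) := fun τ => hY (hB'_meas τ)
    have hmsYm : ∀ τ, MeasurableSet[mSub Y] (Y ⁻¹' (B' τ)) := fun τ => ⟨B' τ, hB'_meas τ, rfl⟩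
    have hchain : (∫ ω, ⨅ τ, g τ ω ∂μ) = ∫ ω, loss h' ω ∂μ := by
      calc (∫ ω, ⨅ τ, g τ ω ∂μ)
          = ∫ ω, ∑ τ : Equiv.Perm (Fin J), (Y ⁻¹' (B' τ)).indicator (g τ) ω ∂μ :=
            integral_congr_ae (ae_of_all _ hP1)
        _ = ∑ τ : Equiv.Perm (Fin J), ∫ ω, (Y ⁻¹' (B' τ)).indicator (g τ) ω ∂μ :=
            integral_finset_sum _ fun τ _ => (hg_int τ).indicator (hmsY τ)
        _ = ∑ τ : Equiv.Perm (Fin J), ∫ ω in Y ⁻¹' (B' τ), g τ ω ∂μ :=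
            Finset.sum_congr rfl fun τ _ => integral_indicator (hmsY τ)
        _ = ∑ τ : Equiv.Perm (Fin J), ∫ ω in Y ⁻¹' (B' τ), loss (Hp h.1 τ) ω ∂μ :=
            Finset.sum_congr rfl fun τ _ =>
              setIntegral_condExp hm (hloss_int _ (hHp_meas h.1 h.2 τ)) (hmsYm τ)
        _ = ∑ τ : Equiv.Perm (Fin J), ∫ ω, (Y ⁻¹' (B' τ)).indicator (loss (Hp h.1 τ)) ω ∂μ :=
            Finset.sum_congr rfl fun τ _ => (integral_indicator (hmsY τ)).symm
        _ = ∫ ω, ∑ τ : Equiv.Perm (Fin J),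
              (Y ⁻¹' (B' τ)).indicator (loss (Hp h.1 τ)) ω ∂μ :=
            (integral_finset_sum _ fun τ _ =>
              ((hloss_int _ (hHp_meas h.1 h.2 τ)).indicator (hmsY τ))).symm
        _ = ∫ ω, loss h' ω ∂μ := integral_congr_ae (ae_of_all _ hP2)
    have hstep : (⨅ h'' : {h : 𝕐 → Fin n → Fin J // Measurable h},
        ∫ ω, loss h''.1 ω ∂μ) ≤ ∫ ω, loss h' ω ∂μ :=
      ciInf_le hbddR ⟨h', hh'_meas⟩
    refine le_trans hstep (le_of_eq ?_)
    rw [← hchain]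
    refine integral_congr_ae (ae_of_all _ fun ω => ?_)
    refine iInf_congr fun τ => ?_
    rw [hfun h.1 τ, hg_def]
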